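/- For all x ∈ (0, 2π), the series -2 Σ_{n=1}^∞ sin(nx)/n converges to x - π (pointwise convergence of the Fourier series of the sawtooth function at its points of continuity). -/

import Mathlib

open Real

open Filter Finset in
theorem sawtooth_fourier_series_pointwise (x : ℝ) (hx : x ∈ Set.Ioo 0 (2 * π)) :
    Filter.Tendsto
      (fun N : ℕ => -2 * ∑ n ∈ Finset.range N, Real.sin ((n + 1) * x) / (n + 1))
      Filter.atTop (nhds (x - π)) := by
  obtain ⟨hx0, hx2⟩ := hx
  have hpi := Real.pi_pos
  set w : ℂ := Complex.exp (x * Complex.I) with hwdef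
  have hwn : ‖w‖ = 1 := Complex.norm_exp_ofReal_mul_I x
  have hcosx : Real.cos x < 1 := by
    rcases lt_or_eq_of_le (Real.cos_le_one x) with h | h
    · exact h
    · exfalso
      obtain ⟨n, hn⟩ := (Real.cos_eq_one_iff x).mp h
      rcases le_or_gt n 0 with hn0 | hn0
      · have : (n : ℝ) * (2 * π) ≤ 0 := by
          apply mul_nonpos_of_nonpos_of_nonneg
          · exact_mod_cast hn0
          · positivity
        linarith
      · have h1 : (1 : ℝ) ≤ (n : ℝ) := by exact_mod_cast hn0
        nlinarith
  have hw1 : w ≠ 1 := by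
    intro h
    have hre : w.re = Real.cos x := Complex.exp_ofReal_mul_I_re x
    rw [h] at hre
    simp at hre
    linarith
  have hw1' : (1 : ℂ) - w ≠ 0 := sub_ne_zero.mpr (Ne.symm hw1)
  -- bound on geometric partial sums
  have hb : ∀ n, ‖∑ i ∈ Finset.range n, w ^ (i + 1)‖ ≤ 2 / ‖1 - w‖ := by
    intro n
    have hsum : ∑ i ∈ Finset.range n, w ^ (i + 1) = w * ((w ^ n - 1) / (w - 1)) := by
      rw [← geom_sum_eq hw1, Finset.mul_sum]
      exact Finset.sum_congr rfl fun i _ => pow_succ' w i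
    rw [hsum, norm_mul, hwn, one_mul, norm_div, ← norm_neg (w - 1), neg_sub]
    have hpos : 0 < ‖(1 : ℂ) - w‖ := norm_pos_iff.mpr hw1'
    rw [div_le_div_iff_of_pos_right hpos]
    calc ‖w ^ n - 1‖ ≤ ‖w ^ n‖ + ‖(1 : ℂ)‖ := norm_sub_le _ _
      _ = 2 := by rw [norm_pow, hwn]; norm_num
  -- Dirichlet's test
  have hc : CauchySeq fun n => ∑ i ∈ Finset.range n, ((i : ℝ) + 1)⁻¹ • w ^ (i + 1) := by
    apply Antitone.cauchySeq_series_mul_of_tendsto_zero_of_bounded (b := 2 / ‖1 - w‖)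
    · intro a b hab
      have h9 : (a : ℝ) + 1 <= (b : ℝ) + 1 := by exact_mod_cast Nat.add_le_add_right hab 1
      exact inv_anti₀ (by positivity) h9
    · have := tendsto_one_div_add_atTop_nhds_zero_nat (𝕜 := ℝ)
      simpa [one_div] using this
    · exact hb
  obtain ⟨l, hl⟩ := cauchySeq_tendsto_of_complete hc
  set F : ℕ → ℂ := fun n => w ^ n / n with hFdef
  have hF0 : F 0 = 0 := by simp [hFdef]
  have hl' : Tendsto (fun N => ∑ n ∈ Finset.range N, F n) atTop (nhds l) := by
    rw [← tendsto_add_atTop_iff_nat 1]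
    refine hl.congr fun N => ?_
    rw [Finset.sum_range_succ', hF0, add_zero]
    refine Finset.sum_congr rfl fun i _ => ?_
    simp only [hFdef, Complex.real_smul]
    push_cast
    ring
  -- Abel's limit theorem
  have habel := Complex.tendsto_tsum_powerSeries_nhdsWithin_lt hl'
  rw [Filter.tendsto_map'_iff] at habel
  -- identify the sum with -log(1 - r w) for r < 1
  have heq : ∀ᶠ r : ℝ in nhdsWithin 1 (Set.Iio 1),
      ((fun z : ℂ => ∑' n, F n * z ^ n) ∘ Complex.ofReal) r = -Complex.log (1 - r * w) := by
    filter_upwards [Ioo_mem_nhdsLT (by norm_num : (-1:ℝ) < 1)]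
      with r hr
    have hrw : ‖(r : ℂ) * w‖ < 1 := by
      rw [norm_mul, hwn, mul_one, Complex.norm_real, Real.norm_eq_abs, abs_lt]
      exact ⟨hr.1, hr.2⟩
    have hs := Complex.hasSum_taylorSeries_neg_log hrw
    rw [Function.comp_apply, ← hs.tsum_eq]
    exact tsum_congr fun n => by rw [hFdef]; simp only [mul_pow]; ring
  have hslit : (1 : ℂ) - w ∈ Complex.slitPlane := by
    rw [Complex.mem_slitPlane_iff]
    left
    have : w.re = Real.cos x := Complex.exp_ofReal_mul_I_re x
    simp [this]
    linarith
  have hlog : Tendsto (fun r : ℝ => -Complex.log (1 - (r : ℂ) * w))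
      (nhdsWithin 1 (Set.Iio 1)) (nhds (-Complex.log (1 - w))) := by
    have hcont : Continuous fun r : ℝ => 1 - (r : ℂ) * w := by continuity
    have h2 : Tendsto (fun r : ℝ => 1 - (r : ℂ) * w) (nhdsWithin 1 (Set.Iio 1))
        (nhds (1 - w)) := by
      have h10 : Tendsto (fun r : Real => 1 - (r : Complex) * w) (nhdsWithin 1 (Set.Iio 1)) (nhds (1 - (1 : Real) * w)) :=
        (hcont.tendsto 1).mono_left nhdsWithin_le_nhds
      simpa using h10
    exact ((continuousAt_clog hslit).tendsto.comp h2).neg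
  have hlval : l = -Complex.log (1 - w) :=
    tendsto_nhds_unique (habel.congr' heq) hlog
  -- compute the imaginary part of the limit
  have hsinhalf : 0 < Real.sin (x / 2) :=
    Real.sin_pos_of_pos_of_lt_pi (by linarith) (by linarith)
  have harg : (-Complex.log (1 - w)).im = (π - x) / 2 := by
    rw [Complex.neg_im, Complex.log_im]
    have hfac : (1 : ℂ) - w = (2 * Real.sin (x / 2) : ℝ) *
        (Complex.cos (((x - π) / 2 : ℝ)) + Complex.sin (((x - π) / 2 : ℝ)) * Complex.I) := by
      rw [← Complex.ofReal_cos, ← Complex.ofReal_sin]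
      have hre : w.re = Real.cos x := Complex.exp_ofReal_mul_I_re x
      have him : w.im = Real.sin x := Complex.exp_ofReal_mul_I_im x
      have hc2 : Real.cos x = 1 - 2 * Real.sin (x / 2) ^ 2 := by
        have h1 := Real.cos_two_mul (x / 2)
        rw [show 2 * (x / 2) = x by ring] at h1
        have h2 := Real.sin_sq_add_cos_sq (x / 2)
        nlinarith
      have hs2 : Real.sin x = 2 * Real.sin (x / 2) * Real.cos (x / 2) := by
        have := Real.sin_two_mul (x / 2)
        rw [show 2 * (x / 2) = x by ring] at this
        linarith
      have hch : Real.cos ((x - π) / 2) = Real.sin (x / 2) := by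
        rw [show (x - π) / 2 = -(π / 2 - x / 2) by ring, Real.cos_neg,
          Real.cos_pi_div_two_sub]
      have hsh : Real.sin ((x - π) / 2) = -Real.cos (x / 2) := by
        rw [show (x - π) / 2 = -(π / 2 - x / 2) by ring, Real.sin_neg,
          Real.sin_pi_div_two_sub]
      have hw_eq : w = (Real.cos x : Complex) + (Real.sin x : Complex) * Complex.I := by
        rw [hwdef, Complex.exp_mul_I, Complex.ofReal_cos, Complex.ofReal_sin]
      rw [hw_eq, hch, hsh, hc2, hs2]
      push_cast
      ring
    rw [hfac, Complex.arg_mul_cos_add_sin_mul_I (by positivity)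
      (Set.mem_Ioc.mpr ⟨by linarith, by linarith⟩)]
    ring
  -- take imaginary parts of partial sums
  have him : Tendsto (fun N => (∑ n ∈ Finset.range (N + 1), F n).im) atTop
      (nhds ((π - x) / 2)) := by
    have h5 : Tendsto (fun N => ∑ n ∈ Finset.range (N + 1), F n) atTop (nhds l) :=
      hl'.comp (tendsto_add_atTop_nat 1)
    have h6 := (Complex.continuous_im.tendsto l).comp h5
    rwa [show l.im = (π - x) / 2 by rw [hlval, harg]] at h6
  have h7 : ∀ N, (∑ n ∈ Finset.range (N + 1), F n).im =
      ∑ n ∈ Finset.range N, Real.sin ((n + 1) * x) / (n + 1) := by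
    intro N
    rw [Finset.sum_range_succ', hF0, add_zero, Complex.im_sum]
    refine Finset.sum_congr rfl fun n _ => ?_
    have hexp : w ^ (n + 1) = Complex.exp ((((n : ℝ) + 1) * x : ℝ) * Complex.I) := by
      rw [hwdef, ← Complex.exp_nat_mul]
      push_cast
      ring_nf
    have hcast : ((n + 1 : ℕ) : ℂ) = (((n : ℝ) + 1 : ℝ) : ℂ) := by push_cast; ring
    rw [hFdef]
    simp only [hexp, hcast]
    rw [Complex.div_ofReal_im, Complex.exp_ofReal_mul_I_im]
  have h8 : Tendsto (fun N => ∑ n ∈ Finset.range N, Real.sin ((n + 1) * x) / (n + 1))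
      atTop (nhds ((π - x) / 2)) := him.congr fun N => h7 N
  have := h8.const_mul (-2 : ℝ)
  simp only [neg_mul] at this ⊢
  convert this using 2
  ring
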